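/- Let n ∈ ℕ, let r, α₁, …, αₙ, x be nonzero complex numbers, and let y ∈ ℂ satisfy y² = x(x − r)(x − r⁻¹)·∏_{i=1}^{n}(x − αᵢ)(x − αᵢ⁻¹)(x − conj(αᵢ))(x − conj(αᵢ)⁻¹). Set z = x + x⁻¹, R = r + r⁻¹, λᵢ = αᵢ + αᵢ⁻¹, and w₋ = (x + 1)(x − 1)·y / x^{n+2}. Then w₋² = (z − 2)(z + 2)(z − R)·∏_{i=1}^{n}(z − λᵢ)(z − conj(λᵢ)). (This is the identification of the quotient map q₋ : X → C₋ from the odd-genus spectral curve X to the curve C₋.) -/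

import Mathlib

open ComplexConjugate

/-- Identification of the quotient map `q₋ : X → C₋` for the odd-genus spectral curve:
if `y² = x(x−r)(x−r⁻¹)·∏ᵢ (x−αᵢ)(x−αᵢ⁻¹)(x−conj αᵢ)(x−(conj αᵢ)⁻¹)`, then with
`z = x + x⁻¹`, `R = r + r⁻¹`, `λᵢ = αᵢ + αᵢ⁻¹`, `w₋ = (x+1)(x−1)y / x^(n+2)`, we have
`w₋² = (z−2)(z+2)(z−R)·∏ᵢ (z−λᵢ)(z−conj λᵢ)`. -/
theorem stmt_1 (n : ℕ) (r : ℂ) (hr : r ≠ 0) (α : Fin n → ℂ) (hα : ∀ i, α i ≠ 0)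
    (x : ℂ) (hx : x ≠ 0) (y : ℂ)
    (hy : y ^ 2 = x * (x - r) * (x - r⁻¹) *
      ∏ i : Fin n, (x - α i) * (x - (α i)⁻¹) * (x - conj (α i)) * (x - (conj (α i))⁻¹))
    (z R : ℂ) (l : Fin n → ℂ)
    (hz : z = x + x⁻¹) (hR : R = r + r⁻¹) (hl : ∀ i, l i = α i + (α i)⁻¹)
    (w : ℂ) (hw : w = (x + 1) * (x - 1) * y / x ^ (n + 2)) :
    w ^ 2 = (z - 2) * (z + 2) * (z - R) * ∏ i : Fin n, (z - l i) * (z - conj (l i)) := by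
  have key : ∀ i : Fin n, (z - l i) * (z - conj (l i)) =
      ((x - α i) * (x - (α i)⁻¹) * (x - conj (α i)) * (x - (conj (α i))⁻¹)) / x ^ 2 := by
    intro i
    have hαi := hα i
    have hc : conj (α i) ≠ 0 := by simpa using hαi
    rw [hz, hl i, map_add, map_inv₀]
    field_simp
    ring
  rw [Finset.prod_congr rfl fun i _ => key i, Finset.prod_div_distrib, Finset.prod_const,
    Finset.card_univ, Fintype.card_fin,
    hw, div_pow, mul_pow, mul_pow, hy, hz, hR]
  have hxp : (x : ℂ) ^ (n + 2) ≠ 0 := pow_ne_zero _ hx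
  have hx2 : ((x : ℂ) ^ 2) ^ n ≠ 0 := pow_ne_zero _ (pow_ne_zero _ hx)
  field_simp
  ring
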